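/- Given the sufficient LMI conditions, the ellipsoidal contract containment holds: if Σ ≻ 0, λ ≥ 1, 0 ≤ β ≤ λ with 0 < β < λ, Π is a linear projection matrix, and the block matrix [[Π(λΣ − YΣ − ΣYᵀ)Πᵀ, ΠP, ΠR],[PᵀΠᵀ, βΣ⁻¹, 0],[RᵀΠᵀ, 0, (λ−β)Σ⁻¹]] is positive semidefinite, then Π(x̄ ⊕ PW ⊕ RW) ⊆ Π(v̄ ⊕ (λI−Y)W) whenever Π(x̄ − v̄) = 0, where W = {z : zᵀΣ⁻¹z ≤ 1}. -/

import Mathlib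

open Matrix

def ellipsoid {n : ℕ} (S : Matrix (Fin n) (Fin n) ℝ) : Set (Fin n → ℝ) :=
  {z | z ⬝ᵥ (S⁻¹ *ᵥ z) ≤ 1}

-- Cauchy-Schwarz for PSD real matrices
lemma psd_cs {n : ℕ} {N : Matrix (Fin n) (Fin n) ℝ} (hN : N.PosSemidef)
    (q w : Fin n → ℝ) :
    (q ⬝ᵥ (N *ᵥ w)) ^ 2 ≤ (q ⬝ᵥ (N *ᵥ q)) * (w ⬝ᵥ (N *ᵥ w)) := by
  obtain ⟨T, hTs, hTmul⟩ : ∃ T : Matrix (Fin n) (Fin n) ℝ, Tᵀ = T ∧ T * T = N := by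
    open scoped MatrixOrder in
    refine ⟨CFC.sqrt N, ?_, CFC.sqrt_mul_sqrt_self N hN.nonneg⟩
    open scoped MatrixOrder in
    have := (CFC.sqrt_nonneg N).posSemidef.1
    simpa [Matrix.IsHermitian, Matrix.conjTranspose_eq_transpose_of_trivial] using this
  have key : ∀ u v : Fin n → ℝ, u ⬝ᵥ (N *ᵥ v) = (T *ᵥ u) ⬝ᵥ (T *ᵥ v) := by
    intro u v
    have hN2 : Tᵀ * T = N := by rw [hTs, hTmul]
    rw [← hN2, ← Matrix.mulVec_mulVec, Matrix.dotProduct_mulVec,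
      Matrix.vecMul_transpose]
  rw [key q w, key q q, key w w]
  have := Finset.sum_mul_sq_le_sq_mul_sq Finset.univ (T *ᵥ q) (T *ᵥ w)
  simpa [dotProduct, pow_two, Finset.mul_sum, mul_comm] using this

lemma sig_nonneg {n : ℕ} {Sig : Matrix (Fin n) (Fin n) ℝ} (hSig : Sig.PosDef)
    (q : Fin n → ℝ) : 0 ≤ q ⬝ᵥ (Sig *ᵥ q) := by
  simpa using hSig.posSemidef.dotProduct_mulVec_nonneg q

-- support bound
lemma support_bound {n : ℕ} {Sig : Matrix (Fin n) (Fin n) ℝ} (hSig : Sig.PosDef)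
    {w : Fin n → ℝ} (hw : w ∈ ellipsoid Sig) (q : Fin n → ℝ) :
    q ⬝ᵥ w ≤ Real.sqrt (q ⬝ᵥ (Sig *ᵥ q)) := by
  have hdet : IsUnit Sig.det := hSig.det_pos.ne'.isUnit
  have hinv : Sig * Sig⁻¹ = 1 := Matrix.mul_nonsing_inv _ hdet
  have hw1 : Sig *ᵥ (Sig⁻¹ *ᵥ w) = w := by
    rw [Matrix.mulVec_mulVec, hinv, Matrix.one_mulVec]
  have hq : q ⬝ᵥ w = q ⬝ᵥ (Sig *ᵥ (Sig⁻¹ *ᵥ w)) := by rw [hw1]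
  have hcs := psd_cs hSig.posSemidef q (Sig⁻¹ *ᵥ w)
  have hwe : (Sig⁻¹ *ᵥ w) ⬝ᵥ (Sig *ᵥ (Sig⁻¹ *ᵥ w)) = w ⬝ᵥ (Sig⁻¹ *ᵥ w) := by
    rw [hw1, dotProduct_comm]
  have h1 : (q ⬝ᵥ w) ^ 2 ≤ (q ⬝ᵥ (Sig *ᵥ q)) * (w ⬝ᵥ (Sig⁻¹ *ᵥ w)) := by
    rw [hq]; rw [hwe] at hcs; exact hcs
  have hnn := sig_nonneg hSig q
  have h2 : (q ⬝ᵥ w) ^ 2 ≤ q ⬝ᵥ (Sig *ᵥ q) := by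
    calc (q ⬝ᵥ w) ^ 2 ≤ (q ⬝ᵥ (Sig *ᵥ q)) * (w ⬝ᵥ (Sig⁻¹ *ᵥ w)) := h1
    _ ≤ (q ⬝ᵥ (Sig *ᵥ q)) * 1 := mul_le_mul_of_nonneg_left hw hnn
    _ = _ := mul_one _
  calc q ⬝ᵥ w ≤ |q ⬝ᵥ w| := le_abs_self _
  _ = Real.sqrt ((q ⬝ᵥ w) ^ 2) := (Real.sqrt_sq_eq_abs _).symm
  _ ≤ _ := Real.sqrt_le_sqrt h2

-- achiever of the support value
lemma support_achieve {n : ℕ} {Sig : Matrix (Fin n) (Fin n) ℝ} (hSig : Sig.PosDef)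
    (q : Fin n → ℝ) :
    ∃ z ∈ ellipsoid Sig, q ⬝ᵥ z = Real.sqrt (q ⬝ᵥ (Sig *ᵥ q)) := by
  have hdet : IsUnit Sig.det := hSig.det_pos.ne'.isUnit
  have hinv : Sig⁻¹ * Sig = 1 := Matrix.nonsing_inv_mul _ hdet
  set c := q ⬝ᵥ (Sig *ᵥ q) with hc
  have hcnn : 0 ≤ c := sig_nonneg hSig q
  rcases eq_or_lt_of_le hcnn with h0 | hpos
  · refine ⟨0, ?_, ?_⟩
    · simp [ellipsoid]
    · simp [← h0]
  · have hs : 0 < Real.sqrt c := Real.sqrt_pos.mpr hpos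
    have hss : Real.sqrt c * Real.sqrt c = c := Real.mul_self_sqrt hcnn
    have hback : Sig⁻¹ *ᵥ (Sig *ᵥ q) = q := by
      rw [Matrix.mulVec_mulVec, hinv, Matrix.one_mulVec]
    have hd : (Sig *ᵥ q) ⬝ᵥ q = c := dotProduct_comm _ _
    refine ⟨(Real.sqrt c)⁻¹ • (Sig *ᵥ q), ?_, ?_⟩
    · simp only [ellipsoid, Set.mem_setOf_eq, Matrix.mulVec_smul, smul_dotProduct,
        dotProduct_smul, hback, smul_eq_mul, hd]
      rw [← hss]
      field_simp
      rw [Real.sqrt_sq hs.le]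
    · simp only [dotProduct_smul, smul_eq_mul, ← hc]
      field_simp
      rw [Real.sq_sqrt hcnn]

lemma dotP {α β : Type*} [Fintype α] [Fintype β] (A : Matrix α β ℝ)
    (x : α → ℝ) (y : β → ℝ) : x ⬝ᵥ (A *ᵥ y) = (Aᵀ *ᵥ x) ⬝ᵥ y := by
  rw [Matrix.dotProduct_mulVec, Matrix.mulVec_transpose]

lemma dotP' {α β : Type*} [Fintype α] [Fintype β] (A : Matrix α β ℝ)
    (x : α → ℝ) (y : β → ℝ) : (Aᵀ *ᵥ x) ⬝ᵥ y = x ⬝ᵥ (A *ᵥ y) := (dotP _ _ _).symm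

lemma sqrt_add_le {a b lam β : ℝ} (ha : 0 ≤ a) (hb : 0 ≤ b) (hβ : 0 < β)
    (hβlam : β < lam) :
    Real.sqrt a + Real.sqrt b ≤ Real.sqrt (lam / β * a + lam / (lam - β) * b) := by
  have hlb : 0 < lam - β := sub_pos.mpr hβlam
  have hsa := Real.sq_sqrt ha
  have hsb := Real.sq_sqrt hb
  have hna := Real.sqrt_nonneg a
  have hnb := Real.sqrt_nonneg b
  set sa := Real.sqrt a
  set sb := Real.sqrt b
  have key : (sa + sb) ^ 2 ≤ lam / β * a + lam / (lam - β) * b := by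
    rw [div_mul_eq_mul_div, div_mul_eq_mul_div,
      div_add_div _ _ hβ.ne' hlb.ne', le_div_iff₀ (by positivity)]
    rw [← hsa, ← hsb]
    nlinarith [sq_nonneg ((lam - β) * sa - β * sb)]
  calc sa + sb = Real.sqrt ((sa + sb) ^ 2) := (Real.sqrt_sq (by positivity)).symm
  _ ≤ _ := Real.sqrt_le_sqrt key

lemma dot_self_continuous {n : ℕ} : Continuous (fun u : Fin n → ℝ => u ⬝ᵥ u) := by
  unfold dotProduct
  exact continuous_finset_sum _ fun i _ => (continuous_apply i).mul (continuous_apply i)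

lemma ball_compact {n : ℕ} : IsCompact {u : Fin n → ℝ | u ⬝ᵥ u ≤ 1} := by
  have hclosed : IsClosed {u : Fin n → ℝ | u ⬝ᵥ u ≤ 1} :=
    isClosed_le dot_self_continuous continuous_const
  have hsub : {u : Fin n → ℝ | u ⬝ᵥ u ≤ 1} ⊆ Metric.closedBall 0 1 := by
    intro u hu
    simp only [Metric.mem_closedBall, dist_zero_right]
    rw [pi_norm_le_iff_of_nonneg zero_le_one]
    intro i
    have h1 : u i * u i ≤ u ⬝ᵥ u := by
      unfold dotProduct
      exact Finset.single_le_sum (f := fun j => u j * u j)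
        (fun j _ => mul_self_nonneg _) (Finset.mem_univ i)
    have h2 : u i * u i ≤ 1 := le_trans h1 hu
    rw [Real.norm_eq_abs, ← Real.sqrt_mul_self (abs_nonneg (u i))]
    calc Real.sqrt (|u i| * |u i|) = Real.sqrt (u i * u i) := by rw [abs_mul_abs_self]
    _ ≤ Real.sqrt 1 := Real.sqrt_le_sqrt h2
    _ = 1 := Real.sqrt_one
  exact (Metric.isCompact_of_isClosed_isBounded hclosed
    (Metric.isBounded_closedBall.subset hsub))

lemma mulVec_continuous {k l : ℕ} (A : Matrix (Fin k) (Fin l) ℝ) :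
    Continuous (fun v : Fin l → ℝ => A *ᵥ v) := by
  have := A.mulVecLin.continuous_of_finiteDimensional
  exact this

lemma mulVec_dot_mulVec {α β γ : Type*} [Fintype α] [Fintype β] [Fintype γ]
    (A : Matrix α β ℝ) (B : Matrix α γ ℝ) (x : β → ℝ) (y : γ → ℝ) :
    (A *ᵥ x) ⬝ᵥ (B *ᵥ y) = x ⬝ᵥ ((Aᵀ * B) *ᵥ y) := by
  conv_lhs => rw [← Matrix.transpose_transpose A]
  rw [dotP', Matrix.mulVec_mulVec]

lemma ellipsoid_compact {n : ℕ} {Sig : Matrix (Fin n) (Fin n) ℝ} (hSig : Sig.PosDef) :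
    IsCompact (ellipsoid Sig) := by
  obtain ⟨T, hTs, hTmul⟩ : ∃ T : Matrix (Fin n) (Fin n) ℝ, Tᵀ = T ∧ T * T = Sig := by
    open scoped MatrixOrder in
    refine ⟨CFC.sqrt Sig, ?_, CFC.sqrt_mul_sqrt_self Sig hSig.posSemidef.nonneg⟩
    open scoped MatrixOrder in
    have := (CFC.sqrt_nonneg Sig).posSemidef.1
    simpa [Matrix.IsHermitian, Matrix.conjTranspose_eq_transpose_of_trivial] using this
  have hdet : IsUnit T.det := by
    have hdd : T.det * T.det = Sig.det := by rw [← Matrix.det_mul, hTmul]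
    have hS := hSig.det_pos
    refine isUnit_iff_ne_zero.mpr fun h => ?_
    rw [h, mul_zero] at hdd
    exact absurd hdd.symm (ne_of_gt hS)
  have h1 : T * T⁻¹ = 1 := Matrix.mul_nonsing_inv _ hdet
  have h2 : T⁻¹ * T = 1 := Matrix.nonsing_inv_mul _ hdet
  have hSinv : Sig⁻¹ = T⁻¹ * T⁻¹ := by rw [← hTmul, Matrix.mul_inv_rev]
  have hTinvT : (T⁻¹)ᵀ = T⁻¹ := by rw [Matrix.transpose_nonsing_inv, hTs]
  have himg : ellipsoid Sig = (fun u => T *ᵥ u) '' {u : Fin n → ℝ | u ⬝ᵥ u ≤ 1} := by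
    ext z
    constructor
    · intro hz
      refine ⟨T⁻¹ *ᵥ z, ?_, ?_⟩
      · have : (T⁻¹ *ᵥ z) ⬝ᵥ (T⁻¹ *ᵥ z) = z ⬝ᵥ (Sig⁻¹ *ᵥ z) := by
          rw [mulVec_dot_mulVec, hTinvT, hSinv]
        rw [Set.mem_setOf_eq, this]; exact hz
      · simp [Matrix.mulVec_mulVec, h1, Matrix.one_mulVec]
    · rintro ⟨u, hu, rfl⟩
      have key : Tᵀ * Sig⁻¹ * T = 1 := by
        rw [hTs, hSinv, ← Matrix.mul_assoc T T⁻¹ T⁻¹, h1, Matrix.one_mul, h2]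
      have heq : (T *ᵥ u) ⬝ᵥ (Sig⁻¹ *ᵥ (T *ᵥ u)) = u ⬝ᵥ u := by
        rw [mulVec_dot_mulVec, Matrix.mulVec_mulVec, key, Matrix.one_mulVec]
      show (T *ᵥ u) ⬝ᵥ (Sig⁻¹ *ᵥ (T *ᵥ u)) ≤ 1
      rw [heq]; exact hu
  rw [himg]
  exact ball_compact.image (mulVec_continuous T)

lemma ellipsoid_convex {n : ℕ} {Sig : Matrix (Fin n) (Fin n) ℝ} (hSig : Sig.PosDef) :
    Convex ℝ (ellipsoid Sig) := by
  intro x hx y hy a b ha hb hab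
  have hN : Sig⁻¹.PosSemidef := hSig.inv.posSemidef
  have hX : x ⬝ᵥ (Sig⁻¹ *ᵥ x) ≤ 1 := hx
  have hY : y ⬝ᵥ (Sig⁻¹ *ᵥ y) ≤ 1 := hy
  have hXnn : 0 ≤ x ⬝ᵥ (Sig⁻¹ *ᵥ x) := by simpa using hN.dotProduct_mulVec_nonneg x
  have hYnn : 0 ≤ y ⬝ᵥ (Sig⁻¹ *ᵥ y) := by simpa using hN.dotProduct_mulVec_nonneg y
  have hcs := psd_cs hN x y
  have hcs' := psd_cs hN y x
  have hxy : x ⬝ᵥ (Sig⁻¹ *ᵥ y) ≤ 1 := by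
    nlinarith [sq_nonneg (x ⬝ᵥ (Sig⁻¹ *ᵥ y) - 1)]
  have hyx : y ⬝ᵥ (Sig⁻¹ *ᵥ x) ≤ 1 := by
    nlinarith [sq_nonneg (y ⬝ᵥ (Sig⁻¹ *ᵥ x) - 1)]
  show (a • x + b • y) ⬝ᵥ (Sig⁻¹ *ᵥ (a • x + b • y)) ≤ 1
  simp only [Matrix.mulVec_add, Matrix.mulVec_smul, add_dotProduct,
    dotProduct_add, smul_dotProduct, dotProduct_smul, smul_eq_mul]
  nlinarith [mul_nonneg (mul_nonneg ha ha) (sub_nonneg.mpr hX),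
    mul_nonneg (mul_nonneg hb hb) (sub_nonneg.mpr hY),
    mul_nonneg (mul_nonneg ha hb) (sub_nonneg.mpr hxy),
    mul_nonneg (mul_nonneg ha hb) (sub_nonneg.mpr hyx)]

lemma lmi_bound {m n : ℕ} {Sig : Matrix (Fin n) (Fin n) ℝ} (hSig : Sig.PosDef)
    (P R Y : Matrix (Fin n) (Fin n) ℝ) (Pim : Matrix (Fin m) (Fin n) ℝ)
    {lam β : ℝ} (hβ : 0 < β) (hβlam : β < lam)
    (hLMI : (Matrix.fromBlocks
        (Pim * (lam • Sig - Y * Sig - Sig * Yᵀ) * Pimᵀ)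
        (Matrix.fromCols (Pim * P) (Pim * R))
        (Matrix.fromRows (Pim * P)ᵀ (Pim * R)ᵀ)
        (Matrix.fromBlocks (β • Sig⁻¹) 0 0 ((lam - β) • Sig⁻¹))).PosSemidef)
    (η : Fin m → ℝ) :
    β⁻¹ * ((Pᵀ *ᵥ (Pimᵀ *ᵥ η)) ⬝ᵥ (Sig *ᵥ (Pᵀ *ᵥ (Pimᵀ *ᵥ η))))
      + (lam - β)⁻¹ * ((Rᵀ *ᵥ (Pimᵀ *ᵥ η)) ⬝ᵥ (Sig *ᵥ (Rᵀ *ᵥ (Pimᵀ *ᵥ η))))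
      ≤ η ⬝ᵥ ((Pim * (lam • Sig - Y * Sig - Sig * Yᵀ) * Pimᵀ) *ᵥ η) := by
  have hlb : 0 < lam - β := sub_pos.mpr hβlam
  have hdet : IsUnit Sig.det := hSig.det_pos.ne'.isUnit
  set p1 : Fin n → ℝ := Pᵀ *ᵥ (Pimᵀ *ᵥ η) with hp1
  set p2 : Fin n → ℝ := Rᵀ *ᵥ (Pimᵀ *ᵥ η) with hp2
  have hSinvS : ∀ v : Fin n → ℝ, Sig⁻¹ *ᵥ (Sig *ᵥ v) = v := by
    intro v
    rw [Matrix.mulVec_mulVec, Matrix.nonsing_inv_mul _ hdet, Matrix.one_mulVec]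
  have htr1 : ∀ y : Fin n → ℝ, η ⬝ᵥ ((Pim * P) *ᵥ y) = p1 ⬝ᵥ y := by
    intro y; rw [dotP, Matrix.transpose_mul, ← Matrix.mulVec_mulVec, hp1]
  have htr2 : ∀ y : Fin n → ℝ, η ⬝ᵥ ((Pim * R) *ᵥ y) = p2 ⬝ᵥ y := by
    intro y; rw [dotP, Matrix.transpose_mul, ← Matrix.mulVec_mulVec, hp2]
  have hrow1 : (Pim * P)ᵀ *ᵥ η = p1 := by
    rw [Matrix.transpose_mul, ← Matrix.mulVec_mulVec, hp1]
  have hrow2 : (Pim * R)ᵀ *ᵥ η = p2 := by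
    rw [Matrix.transpose_mul, ← Matrix.mulVec_mulVec, hp2]
  have hcomm1 : (Sig *ᵥ p1) ⬝ᵥ p1 = p1 ⬝ᵥ (Sig *ᵥ p1) := dotProduct_comm _ _
  have hcomm2 : (Sig *ᵥ p2) ⬝ᵥ p2 = p2 ⬝ᵥ (Sig *ᵥ p2) := dotProduct_comm _ _
  have h0 := hLMI.dotProduct_mulVec_nonneg (Sum.elim η (Sum.elim ((-β⁻¹) • (Sig *ᵥ p1))
    ((-(lam - β)⁻¹) • (Sig *ᵥ p2))))
  simp only [star_trivial, Matrix.fromBlocks_mulVec, Matrix.fromCols_mulVec_sumElim,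
    Matrix.fromRows_mulVec, sumElim_dotProduct_sumElim, Matrix.mulVec_smul,
    Matrix.smul_mulVec, Matrix.zero_mulVec, add_zero, zero_add,
    dotProduct_add, add_dotProduct, dotProduct_smul,
    smul_dotProduct, smul_eq_mul, Sum.elim_comp_inl, Sum.elim_comp_inr,
    dotProduct_zero, mul_zero, neg_zero, add_zero, zero_add,
    hSinvS, htr1, htr2, hrow1, hrow2, hcomm1, hcomm2] at h0
  have hb1 : β⁻¹ * β = 1 := inv_mul_cancel₀ hβ.ne'
  have hb2 : (lam - β)⁻¹ * (lam - β) = 1 := inv_mul_cancel₀ hlb.ne'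
  set a : ℝ := p1 ⬝ᵥ (Sig *ᵥ p1) with ha
  set b : ℝ := p2 ⬝ᵥ (Sig *ᵥ p2) with hbb
  set c : ℝ := η ⬝ᵥ ((Pim * (lam • Sig - Y * Sig - Sig * Yᵀ) * Pimᵀ) *ᵥ η) with hcc
  have e1 : -β⁻¹ * (β * (-β⁻¹ * a)) = β⁻¹ * a := by
    field_simp
  have e2 : -(lam - β)⁻¹ * ((lam - β) * (-(lam - β)⁻¹ * b)) = (lam - β)⁻¹ * b := by
    field_simp
  rw [e1, e2] at h0
  linarith [h0]

lemma conj_dot {m n : ℕ} (A : Matrix (Fin m) (Fin n) ℝ) (Z : Matrix (Fin n) (Fin n) ℝ)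
    (v : Fin m → ℝ) :
    v ⬝ᵥ ((A * Z * Aᵀ) *ᵥ v) = (Aᵀ *ᵥ v) ⬝ᵥ (Z *ᵥ (Aᵀ *ᵥ v)) := by
  rw [← Matrix.mulVec_mulVec, ← Matrix.mulVec_mulVec, dotP A v]

lemma conj_dot' {n : ℕ} (M Sig : Matrix (Fin n) (Fin n) ℝ) (g : Fin n → ℝ) :
    (Mᵀ *ᵥ g) ⬝ᵥ (Sig *ᵥ (Mᵀ *ᵥ g)) = g ⬝ᵥ ((M * Sig * Mᵀ) *ᵥ g) := by
  rw [dotP' M g, Matrix.mulVec_mulVec, Matrix.mulVec_mulVec]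

/-- Sufficient LMI conditions imply the ellipsoidal contract containment:
if Σ ≻ 0, λ ≥ 1, 0 < β < λ, the block matrix
[[Π(λΣ − YΣ − ΣYᵀ)Πᵀ, ΠP, ΠR],[PᵀΠᵀ, βΣ⁻¹, 0],[RᵀΠᵀ, 0, (λ−β)Σ⁻¹]] is PSD, and
Π(x̄ − v̄) = 0, then Π(x̄ ⊕ PW ⊕ RW) ⊆ Π(v̄ ⊕ (λI−Y)W). -/
theorem stmt13 {m n : ℕ} (Sig : Matrix (Fin n) (Fin n) ℝ) (hSig : Sig.PosDef)
    (P R Y : Matrix (Fin n) (Fin n) ℝ) (xbar vbar : Fin n → ℝ)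
    (Pim : Matrix (Fin m) (Fin n) ℝ)
    (lam β : ℝ) (hlam : 1 ≤ lam) (hβ : 0 < β) (hβlam : β < lam)
    (hLMI : (Matrix.fromBlocks
        (Pim * (lam • Sig - Y * Sig - Sig * Yᵀ) * Pimᵀ)
        (Matrix.fromCols (Pim * P) (Pim * R))
        (Matrix.fromRows (Pim * P)ᵀ (Pim * R)ᵀ)
        (Matrix.fromBlocks (β • Sig⁻¹) 0 0 ((lam - β) • Sig⁻¹))).PosSemidef)
    (hcenter : Pim *ᵥ (xbar - vbar) = 0) :
    ∀ w1 ∈ ellipsoid Sig, ∀ w2 ∈ ellipsoid Sig,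
      ∃ z ∈ ellipsoid Sig,
        Pim *ᵥ (xbar + P *ᵥ w1 + R *ᵥ w2) =
          Pim *ᵥ (vbar + (lam • (1 : Matrix (Fin n) (Fin n) ℝ) - Y) *ᵥ z) := by
  intro w1 hw1 w2 hw2
  have hlam0 : (0:ℝ) < lam := lt_of_lt_of_le one_pos hlam
  have hlb : 0 < lam - β := sub_pos.mpr hβlam
  set M : Matrix (Fin n) (Fin n) ℝ := lam • (1 : Matrix (Fin n) (Fin n) ℝ) - Y with hM
  set K : Matrix (Fin m) (Fin n) ℝ := Pim * M with hK
  set S : Set (Fin m → ℝ) := (fun z => K *ᵥ z) '' ellipsoid Sig with hS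
  set p : Fin m → ℝ := Pim *ᵥ (P *ᵥ w1) + Pim *ᵥ (R *ᵥ w2) with hp
  have hSconv : Convex ℝ S := by
    have := (ellipsoid_convex hSig).linear_image K.mulVecLin
    rw [Matrix.coe_mulVecLin] at this; exact this
  have hSclosed : IsClosed S :=
    ((ellipsoid_compact hSig).image (mulVec_continuous K)).isClosed
  have hpS : p ∈ S := by
    by_contra hpcon
    obtain ⟨f, u, hfa, hfp⟩ := geometric_hahn_banach_closed_point hSconv hSclosed hpcon
    set η : Fin m → ℝ := fun i => f (Pi.single i 1) with hη
    have hfeq : ∀ v : Fin m → ℝ, f v = η ⬝ᵥ v := by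
      intro v
      have hv : v = ∑ i, v i • (Pi.single i 1 : Fin m → ℝ) := by
        conv_lhs => rw [← Finset.univ_sum_single v]
        exact Finset.sum_congr rfl fun i _ => by
          rw [← Pi.single_smul, smul_eq_mul, mul_one]
      calc f v = f (∑ i, v i • (Pi.single i 1 : Fin m → ℝ)) := by rw [← hv]
      _ = ∑ i, v i * f (Pi.single i (1:ℝ)) := by
          rw [map_sum]; exact Finset.sum_congr rfl fun i _ => by rw [_root_.map_smul, smul_eq_mul]
      _ = η ⬝ᵥ v := by simp [dotProduct, hη, mul_comm]
    set g : Fin n → ℝ := Pimᵀ *ᵥ η with hg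
    set p1 : Fin n → ℝ := Pᵀ *ᵥ g with hp1
    set p2 : Fin n → ℝ := Rᵀ *ᵥ g with hp2
    set q : Fin n → ℝ := Mᵀ *ᵥ g with hq
    set a : ℝ := p1 ⬝ᵥ (Sig *ᵥ p1) with ha
    set b : ℝ := p2 ⬝ᵥ (Sig *ᵥ p2) with hb
    set c : ℝ := q ⬝ᵥ (Sig *ᵥ q) with hc
    have hann : 0 ≤ a := sig_nonneg hSig p1
    have hbnn : 0 ≤ b := sig_nonneg hSig p2
    have hfp_val : f p = p1 ⬝ᵥ w1 + p2 ⬝ᵥ w2 := by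
      rw [hfeq p, hp, dotProduct_add, dotP Pim η (P *ᵥ w1), dotP Pim η (R *ᵥ w2),
        ← hg, dotP P g w1, dotP R g w2, ← hp1, ← hp2]
    have hlmi := lmi_bound hSig P R Y Pim hβ hβlam hLMI η
    set α : ℝ := η ⬝ᵥ ((Pim * (lam • Sig - Y * Sig - Sig * Yᵀ) * Pimᵀ) *ᵥ η) with hα
    have hlmi' : β⁻¹ * a + (lam - β)⁻¹ * b ≤ α := hlmi
    have hαg : α = g ⬝ᵥ ((lam • Sig - Y * Sig - Sig * Yᵀ) *ᵥ g) := by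
      rw [hα, conj_dot Pim _ η, ← hg]
    have hMdecomp : M * Sig * Mᵀ
        = lam • (lam • Sig - Y * Sig - Sig * Yᵀ) + Y * Sig * Yᵀ := by
      rw [hM]
      simp only [Matrix.transpose_sub, Matrix.transpose_smul, Matrix.transpose_one,
        Matrix.sub_mul, Matrix.mul_sub, Matrix.smul_mul, Matrix.mul_smul,
        Matrix.one_mul, Matrix.mul_one, smul_sub, smul_smul]
      abel
    have hcval : c = lam * α + (Yᵀ *ᵥ g) ⬝ᵥ (Sig *ᵥ (Yᵀ *ᵥ g)) := by
      rw [hc, hq, conj_dot' M Sig g, hMdecomp, Matrix.add_mulVec, dotProduct_add,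
        Matrix.smul_mulVec, dotProduct_smul, smul_eq_mul, ← hαg,
        ← conj_dot' Y Sig g]
    have hynn : 0 ≤ (Yᵀ *ᵥ g) ⬝ᵥ (Sig *ᵥ (Yᵀ *ᵥ g)) := sig_nonneg hSig _
    have hchain : f p ≤ Real.sqrt c := by
      have h1 : p1 ⬝ᵥ w1 ≤ Real.sqrt a := support_bound hSig hw1 p1
      have h2 : p2 ⬝ᵥ w2 ≤ Real.sqrt b := support_bound hSig hw2 p2
      have h3 := sqrt_add_le hann hbnn hβ hβlam
      have h4 : lam / β * a + lam / (lam - β) * b ≤ c := by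
        have heq : lam / β * a + lam / (lam - β) * b
            = lam * (β⁻¹ * a + (lam - β)⁻¹ * b) := by ring
        rw [heq, hcval]
        nlinarith [hlmi', hynn, hlam0]
      have h5 := Real.sqrt_le_sqrt h4
      rw [hfp_val]
      linarith [h1, h2, h3, h5]
    obtain ⟨z, hz, hqz⟩ := support_achieve hSig q
    have hzS : K *ᵥ z ∈ S := ⟨z, hz, rfl⟩
    have hfz : f (K *ᵥ z) = Real.sqrt c := by
      rw [hfeq, hK, dotP (Pim * M) η z, Matrix.transpose_mul, ← Matrix.mulVec_mulVec,
        ← hg, ← hq, hqz, ← hc]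
    have := hfa _ hzS
    rw [hfz] at this
    linarith [hchain, hfp]
  obtain ⟨z, hz, hKz⟩ := hpS
  refine ⟨z, hz, ?_⟩
  have hxv : Pim *ᵥ xbar = Pim *ᵥ vbar := by
    have h := hcenter; rwa [Matrix.mulVec_sub, sub_eq_zero] at h
  have hMz : Pim *ᵥ (M *ᵥ z) = p := by
    rw [Matrix.mulVec_mulVec, ← hK]; exact hKz
  rw [Matrix.mulVec_add, Matrix.mulVec_add, Matrix.mulVec_add, hxv, hMz, hp]
  abel
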